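/- Let p be an odd prime dividing k+1 (k ≥ 0 an integer). Then there exists j with 0 ≤ j ≤ k such that the binomial coefficient C(4k+5, 4j+2) is not divisible by p. -/
import Mathlib



lemma mod_pow_succ' (p c i : ℕ) (hp : 0 < p) :
    c % p ^ (i + 1) = p * (c / p % p ^ i) + c % p := by
  have hpi : 0 < p ^ i := pow_pos hp i
  have h2 : c / p % p ^ i < p ^ i := Nat.mod_lt _ hpi
  have h3 : c % p < p := Nat.mod_lt _ hp
  have hb : p * (c / p % p ^ i) + c % p < p * p ^ i := by
    have : p * (c / p % p ^ i) + p ≤ p * p ^ i := by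
      rw [← Nat.mul_succ]
      exact Nat.mul_le_mul_left p h2
    omega
  conv_lhs => rw [← Nat.div_add_mod c p]
  rw [pow_succ', Nat.add_mod, Nat.mul_mod_mul_left,
    Nat.mod_eq_of_lt (lt_of_lt_of_le h3 (Nat.le_mul_of_pos_right p hpi)),
    Nat.mod_eq_of_lt hb]

lemma not_dvd_choose_sub (p : ℕ) (hp : p.Prime) :
    ∀ M c : ℕ, c ≤ M → (∀ i, c % p ^ i ≤ M % p ^ i) → ¬ p ∣ Nat.choose M (M - c) := by
  haveI : Fact p.Prime := ⟨hp⟩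
  intro M
  induction M using Nat.strong_induction_on with
  | _ M ih =>
    intro c hc h
    rcases Nat.eq_zero_or_pos M with rfl | hM
    · have : c = 0 := Nat.le_zero.mp hc
      subst this
      simp only [Nat.sub_zero, Nat.choose_self]
      exact fun hd => hp.ne_one (Nat.dvd_one.mp hd)
    · have hp2 := hp.two_le
      set d := c % p with hd'
      set D := c / p with hD'
      set m0 := M % p with hm0'
      set Q := M / p with hQ'
      have hd : d ≤ m0 := by have := h 1; simpa using this
      have hDQ : D ≤ Q := Nat.div_le_div_right hc
      have hQ : Q < M := Nat.div_lt_self hM hp.one_lt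
      have hm0 : m0 < p := Nat.mod_lt _ hp.pos
      have hM' : p * Q + m0 = M := Nat.div_add_mod M p
      have hc' : p * D + d = c := Nat.div_add_mod c p
      have hmul : p * D ≤ p * Q := Nat.mul_le_mul_left p hDQ
      have hsub : p * (Q - D) = p * Q - p * D := Nat.mul_sub p Q D
      have hmc : M - c = p * (Q - D) + (m0 - d) := by omega
      have h1 : (M - c) % p = m0 - d := by
        rw [hmc, Nat.mul_add_mod, Nat.mod_eq_of_lt (by omega)]
      have h2 : (M - c) / p = Q - D := by
        rw [hmc, Nat.mul_add_div hp.pos, Nat.div_eq_of_lt (by omega), Nat.add_zero]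
      intro hdv
      have luc := Choose.choose_modEq_choose_mod_mul_choose_div_nat (p := p) (n := M) (k := M - c)
      rw [h1, h2, ← hm0', ← hQ'] at luc
      have hdv2 : p ∣ Nat.choose m0 (m0 - d) * Nat.choose Q (Q - D) := by
        rw [Nat.dvd_iff_mod_eq_zero] at hdv ⊢
        rw [← luc]; exact hdv
      rcases (Nat.Prime.dvd_mul hp).mp hdv2 with h' | h'
      · have hfac : p ∣ Nat.factorial m0 := by
          have heq := Nat.choose_mul_factorial_mul_factorial (Nat.sub_le m0 d)
          exact heq ▸ (h'.mul_right _).mul_right _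
        have := (Nat.Prime.dvd_factorial hp).mp hfac
        omega
      · refine ih Q hQ D hDQ (fun i => ?_) h'
        have hc1 := h (i + 1)
        rw [mod_pow_succ' p c i hp.pos, mod_pow_succ' p M i hp.pos, ← hd', ← hD', ← hm0', ← hQ']
          at hc1
        have hlt : p * (D % p ^ i) < p * (Q % p ^ i + 1) := by
          have : p * (Q % p ^ i + 1) = p * (Q % p ^ i) + p := by ring
          omega
        exact Nat.lt_succ_iff.mp (Nat.lt_of_mul_lt_mul_left hlt)


lemma pow_mod4_of_three (p j : ℕ) (h : p % 4 = 3) :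
    p ^ j % 4 = if j % 2 = 0 then 1 else 3 := by
  induction j with
  | zero => simp
  | succ j ih =>
    rw [pow_succ, Nat.mul_mod, ih, h]
    by_cases hj : j % 2 = 0
    · rw [if_pos hj, if_neg (by omega)]
    · rw [if_neg hj, if_pos (by omega)]

lemma pow_mod4_of_one (p j : ℕ) (h : p % 4 = 1) : p ^ j % 4 = 1 := by
  rw [Nat.pow_mod, h, one_pow]
  omega

lemma exists_c (p T : ℕ) (hp : p.Prime) (hodd : Odd p) (hT : 0 < T) (hT2 : T % 2 = 0) :
    ∃ c, 1 ≤ c ∧ c ≤ T ∧ (∀ i, c % p ^ i ≤ T % p ^ i) ∧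
      ((p * c) % 4 = 2 ∨ (p * c) % 4 = 3) := by
  have hp2 : p % 2 = 1 := Nat.odd_iff.mp hodd
  have hp3 : 3 ≤ p := by have := hp.two_le; omega
  have hp4 : p % 4 = 1 ∨ p % 4 = 3 := by omega
  set A := Nat.log p T with hA
  have hpA_le : p ^ A ≤ T := Nat.pow_log_le_self p hT.ne'
  have hT_lt : T < p ^ (A + 1) := Nat.lt_pow_succ_log_self hp.one_lt T
  have hpApos : 0 < p ^ A := pow_pos hp.pos A
  have hpAsucc : p * p ^ A = p ^ (A + 1) := (pow_succ' p A).symm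
  -- powers are odd
  have hodd_pow : ∀ j : ℕ, p ^ j % 2 = 1 := fun j => by rw [Nat.pow_mod, hp2, one_pow]; omega
  by_cases h2 : 2 * p ^ A ≤ T
  · refine ⟨2 * p ^ A, by omega, h2, fun i => ?_, Or.inl ?_⟩
    · rcases le_or_gt i A with hi | hi
      · have hdvd : p ^ i ∣ 2 * p ^ A := (pow_dvd_pow p hi).mul_left 2
        rw [Nat.mod_eq_zero_of_dvd hdvd]
        exact Nat.zero_le _
      · have hle : p ^ (A + 1) ≤ p ^ i := Nat.pow_le_pow_right hp.pos hi
        have hlt1 : 2 * p ^ A < p ^ i := by omega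
        rw [Nat.mod_eq_of_lt hlt1, Nat.mod_eq_of_lt (by omega)]
        exact h2
    · have heq : p * (2 * p ^ A) = 2 * p ^ (A + 1) := by ring
      have := hodd_pow (A + 1)
      omega
  · -- T < 2 * p ^ A, so top digit is 1
    set T' := T - p ^ A with hT'def
    have hT'lt : T' < p ^ A := by omega
    have hT'pos : 0 < T' := by
      have := hodd_pow A
      omega
    set B := Nat.log p T' with hB
    have hpB_le : p ^ B ≤ T' := Nat.pow_log_le_self p hT'pos.ne'
    have hT'_lt : T' < p ^ (B + 1) := Nat.lt_pow_succ_log_self hp.one_lt T'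
    have hpBpos : 0 < p ^ B := pow_pos hp.pos B
    have hBA : B < A := by
      have hlt : p ^ B < p ^ A := lt_of_le_of_lt hpB_le hT'lt
      exact (Nat.pow_lt_pow_iff_right hp.one_lt).mp hlt
    have hTsum : T = p ^ A + T' := by omega
    -- middle range: T % p^i = T' for B < i ≤ A
    have hmid : ∀ i, B < i → i ≤ A → T % p ^ i = T' := by
      intro i hBi hiA
      have hd : p ^ i ∣ p ^ A := pow_dvd_pow p hiA
      have hlt : T' < p ^ i := lt_of_lt_of_le hT'_lt (Nat.pow_le_pow_right hp.pos hBi)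
      rw [hTsum, Nat.add_mod, Nat.mod_eq_zero_of_dvd hd, Nat.zero_add, Nat.mod_mod_of_dvd,
        Nat.mod_eq_of_lt hlt]
      · exact dvd_rfl
    have hhigh : ∀ i, A < i → T % p ^ i = T := fun i hAi =>
      Nat.mod_eq_of_lt (lt_of_lt_of_le hT_lt (Nat.pow_le_pow_right hp.pos hAi))
    by_cases hsing : p % 4 = 3 ∧ (A % 2 = 0 ∨ B % 2 = 0)
    · obtain ⟨hp43, hAB⟩ := hsing
      rcases hAB with hA0 | hB0
      · -- c = p ^ A
        refine ⟨p ^ A, hpApos, hpA_le, fun i => ?_, Or.inr ?_⟩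
        · rcases le_or_gt i A with hi | hi
          · rw [Nat.mod_eq_zero_of_dvd (pow_dvd_pow p hi)]
            exact Nat.zero_le _
          · rw [Nat.mod_eq_of_lt (lt_of_lt_of_le (Nat.pow_lt_pow_succ hp.one_lt)
              (Nat.pow_le_pow_right hp.pos hi)), hhigh i hi]
            exact hpA_le
        · rw [hpAsucc, pow_mod4_of_three p (A + 1) hp43, if_neg (by omega)]
      · -- c = p ^ B
        refine ⟨p ^ B, hpBpos, le_trans hpB_le (by omega), fun i => ?_, Or.inr ?_⟩
        · rcases le_or_gt i B with hi | hi
          · rw [Nat.mod_eq_zero_of_dvd (pow_dvd_pow p hi)]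
            exact Nat.zero_le _
          · have hcmod : p ^ B % p ^ i = p ^ B :=
              Nat.mod_eq_of_lt (lt_of_lt_of_le (Nat.pow_lt_pow_succ hp.one_lt)
                (Nat.pow_le_pow_right hp.pos hi))
            rw [hcmod]
            rcases le_or_gt i A with hiA | hiA
            · rw [hmid i hi hiA]; exact hpB_le
            · rw [hhigh i hiA]
              exact le_trans hpB_le (by omega)
        · have : p * p ^ B = p ^ (B + 1) := (pow_succ' p B).symm
          rw [this, pow_mod4_of_three p (B + 1) hp43, if_neg (by omega)]
    · -- c = p ^ A + p ^ B
      refine ⟨p ^ A + p ^ B, by omega, by omega, fun i => ?_, Or.inl ?_⟩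
      · rcases le_or_gt i B with hi | hi
        · have : p ^ i ∣ p ^ A + p ^ B := (pow_dvd_pow p (le_of_lt (lt_of_le_of_lt hi hBA))).add
            (pow_dvd_pow p hi)
          rw [Nat.mod_eq_zero_of_dvd this]
          exact Nat.zero_le _
        · rcases le_or_gt i A with hiA | hiA
          · have hd : p ^ i ∣ p ^ A := pow_dvd_pow p hiA
            have hltB : p ^ B < p ^ i := lt_of_lt_of_le (Nat.pow_lt_pow_succ hp.one_lt)
              (Nat.pow_le_pow_right hp.pos hi)
            rw [Nat.add_mod, Nat.mod_eq_zero_of_dvd hd, Nat.zero_add,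
              Nat.mod_eq_of_lt hltB, Nat.mod_eq_of_lt hltB, hmid i hi hiA]
            exact hpB_le
          · have hcb : p ^ A + p ^ B < p ^ i := by
              have h1 : p ^ B < p ^ A := lt_of_le_of_lt hpB_le hT'lt
              have h2 : p ^ (A + 1) ≤ p ^ i := Nat.pow_le_pow_right hp.pos hiA
              omega
            rw [Nat.mod_eq_of_lt hcb, hhigh i hiA]
            omega
      · have heq : p * (p ^ A + p ^ B) = p ^ (A + 1) + p ^ (B + 1) := by ring
        rw [heq]
        have hA1 : p ^ (A + 1) % 4 = 1 := by
          rcases hp4 with h1 | h3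
          · exact pow_mod4_of_one p (A + 1) h1
          · rw [pow_mod4_of_three p (A + 1) h3, if_pos (by push_neg at hsing; have := hsing h3; omega)]
        have hB1 : p ^ (B + 1) % 4 = 1 := by
          rcases hp4 with h1 | h3
          · exact pow_mod4_of_one p (B + 1) h1
          · rw [pow_mod4_of_three p (B + 1) h3, if_pos (by push_neg at hsing; have := hsing h3; omega)]
        omega

/-- If `p` is an odd prime dividing `k+1`, then there is `0 ≤ j ≤ k` such that
`p` does not divide the binomial coefficient `C(4k+5, 4j+2)`. -/
theorem exists_binomial_not_dvd (k p : ℕ) (hp : p.Prime) (hodd : Odd p)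
    (hdvd : p ∣ (k + 1)) :
    ∃ j : ℕ, j ≤ k ∧ ¬ p ∣ Nat.choose (4 * k + 5) (4 * j + 2) := by
  haveI : Fact p.Prime := ⟨hp⟩
  have hp2 : p % 2 = 1 := Nat.odd_iff.mp hodd
  have hp3 : 3 ≤ p := by have := hp.two_le; omega
  obtain ⟨m, hm⟩ := hdvd
  have hm1 : 1 ≤ m := by
    rcases Nat.eq_zero_or_pos m with rfl | h
    · omega
    · exact h
  set T := 4 * m with hTdef
  obtain ⟨c, hc1, hcT, hdig, hmod4⟩ := exists_c p T hp hodd (by omega) (by omega)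
  set s := T - c with hsdef
  set e := if (p * c) % 4 = 2 then 0 else 1 with hedef
  have he01 : e = 0 ∨ e = 1 := by
    rw [hedef]; split <;> simp
  set r := p * s + e with hrdef
  have hn : 4 * k + 5 = p * T + 1 := by
    have h1 : 4 * k + 5 = 4 * (k + 1) + 1 := by ring
    rw [h1, hm]; ring
  have hps : p * s + p * c = p * T := by
    rw [← Nat.mul_add]; congr 1; omega
  have hpT4 : p * T = 4 * (p * m) := by rw [hTdef]; ring
  have hpc3 : 3 ≤ p * c := le_trans hp3 (Nat.le_mul_of_pos_right p hc1)
  have hr4 : r % 4 = 2 := by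
    rcases hmod4 with h | h
    · have he : e = 0 := by rw [hedef, if_pos h]
      rw [hrdef, he]
      omega
    · have he : e = 1 := by rw [hedef, if_neg (by omega)]
      rw [hrdef, he]
      omega
  have hrle : r ≤ 4 * k + 2 := by
    have hk1 : k + 1 = p * m := hm
    have he1 : e ≤ 1 := by omega
    omega
  refine ⟨r / 4, by omega, ?_⟩
  have hreq : 4 * (r / 4) + 2 = r := by omega
  rw [hreq]
  -- Lucas step
  have hre : r % p = e := by
    rw [hrdef, Nat.mul_add_mod, Nat.mod_eq_of_lt (by omega)]
  have hrd : r / p = s := by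
    rw [hrdef, Nat.mul_add_div hp.pos, Nat.div_eq_of_lt (by omega), Nat.add_zero]
  have hn1 : (4 * k + 5) % p = 1 := by
    rw [hn, Nat.mul_add_mod, Nat.mod_eq_of_lt (by omega)]
  have hn2 : (4 * k + 5) / p = T := by
    rw [hn, Nat.mul_add_div hp.pos, Nat.div_eq_of_lt (by omega), Nat.add_zero]
  have luc := Choose.choose_modEq_choose_mod_mul_choose_div_nat (p := p) (n := 4 * k + 5) (k := r)
  rw [hre, hrd, hn1, hn2] at luc
  have h1e : Nat.choose 1 e = 1 := by
    rcases he01 with h | h <;> rw [h] <;> rfl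
  rw [h1e, Nat.one_mul] at luc
  intro hdv
  have hdvT : p ∣ Nat.choose T s := by
    rw [Nat.dvd_iff_mod_eq_zero] at hdv ⊢
    rw [← luc]; exact hdv
  exact not_dvd_choose_sub p hp T c hcT hdig hdvT
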